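/- (Decay of the grand maximal function for compactly supported distributions.) Let n ≥ 1, let p(·) ∈ M𝒫₀ with exponent p₀, and let N be an integer with N > n/p₀ + n + 1. Suppose f ∈ H^{p(·)} and R > 1 are such that f is supported in the closed ball B(0,R), i.e. f(φ) = 0 for every Schwartz function φ whose support is disjoint from the closed ball B(0,R). Then for every x with |x| ≥ 4R, 𝓜_N f(x) ≤ C ‖f‖_{H^{p(·)}} ‖χ_{B(0,R)}‖_{p(·)}^{−1}, where C depends only on N, n, p(·) and p₀. -/

import Mathlib

open MeasureTheory Metric Filter Topology ENNReal SchwartzMap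
open scoped NNReal

noncomputable section

namespace VarHardy

variable {n : ℕ}

/-- `n`-dimensional Euclidean space. -/
abbrev Euc (n : ℕ) := EuclideanSpace ℝ (Fin n)

/-- The closed axis-parallel cube centered at `c` with half side length `r`. -/
def cube (c : Euc n) (r : ℝ) : Set (Euc n) := {y | ∀ i, |y i - c i| ≤ r}

/-- The Hardy–Littlewood maximal operator of an `ℝ≥0∞`-valued function: the supremum of
the averages over all axis-parallel cubes containing the point. -/
def maximalFn (f : Euc n → ℝ≥0∞) (x : Euc n) : ℝ≥0∞ :=
  ⨆ (c : Euc n) (r : ℝ) (_ : 0 < r) (_ : x ∈ cube c r),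
    (volume (cube c r))⁻¹ * ∫⁻ y in cube c r, f y

/-- The Hardy–Littlewood maximal operator of a real-valued function. -/
def maximalOp (f : Euc n → ℝ) (x : Euc n) : ℝ≥0∞ :=
  maximalFn (fun y => (‖f y‖₊ : ℝ≥0∞)) x

/-- The Luxemburg quasi-norm `‖f‖_{p(·)}` of an `ℝ≥0∞`-valued function `f`. -/
def luxNorm (p : Euc n → ℝ) (f : Euc n → ℝ≥0∞) : ℝ≥0∞ :=
  sInf {l : ℝ≥0∞ | ∫⁻ x, (f x / l) ^ p x ∂volume ≤ 1}

/-- The Luxemburg quasi-norm of a real-valued function. -/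
def luxNorm' (p : Euc n → ℝ) (f : Euc n → ℝ) : ℝ≥0∞ :=
  luxNorm p (fun x => (‖f x‖₊ : ℝ≥0∞))

/-- `p(·) ∈ M𝒫₀` with exponent `p₀`:  `0 < p₀ < p₋`, `p₊ < ∞`, and the Hardy–Littlewood
maximal operator is bounded on `L^{p(·)/p₀}`. -/
structure IsMP0 (p : Euc n → ℝ) (p₀ : ℝ) : Prop where
  meas : Measurable p
  p₀_pos : 0 < p₀
  p₀_lt_essInf : ∃ m : ℝ, p₀ < m ∧ ∀ᵐ x ∂(volume : Measure (Euc n)), m ≤ p x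
  essSup_lt_top : ∃ M : ℝ, ∀ᵐ x ∂(volume : Measure (Euc n)), p x ≤ M
  maximal_bound : ∃ C : ℝ≥0∞, C < ∞ ∧ ∀ f : Euc n → ℝ≥0∞, Measurable f →
    luxNorm (fun x => p x / p₀) (maximalFn f) ≤ C * luxNorm (fun x => p x / p₀) f

section Schwartz

lemma hasTemperateGrowth_affine (A : Euc n →L[ℝ] Euc n) (b : Euc n) :
    Function.HasTemperateGrowth (fun y : Euc n => A y + b) := by
  apply Function.HasTemperateGrowth.of_fderiv (k := 1) (C := ‖A‖ + ‖b‖)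
  · have h : (fderiv ℝ fun y : Euc n => A y + b) = fun _ => A := by
      funext y
      rw [fderiv_add_const]
      exact A.fderiv
    rw [h]
    exact .const _
  · exact A.differentiable.add_const _
  · intro z
    have h1 : ‖A z + b‖ ≤ ‖A‖ * ‖z‖ + ‖b‖ :=
      (norm_add_le _ _).trans (by gcongr; exact A.le_opNorm z)
    have h2 : ‖A‖ * ‖z‖ + ‖b‖ ≤ (‖A‖ + ‖b‖) * (1 + ‖z‖) ^ 1 := by
      have hz := norm_nonneg z
      have hA := A.opNorm_nonneg
      have hb := norm_nonneg b
      nlinarith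
    exact h1.trans h2

lemma hasTemperateGrowth_dilateShift (t : ℝ) (x : Euc n) :
    Function.HasTemperateGrowth (fun y : Euc n => t⁻¹ • (x - y)) := by
  have h : (fun y : Euc n => t⁻¹ • (x - y)) =
      fun y : Euc n => (-(t⁻¹ • ContinuousLinearMap.id ℝ (Euc n))) y + t⁻¹ • x := by
    funext y
    simp [ContinuousLinearMap.neg_apply, ContinuousLinearMap.smul_apply,
      ContinuousLinearMap.id_apply, smul_sub, sub_eq_neg_add]
  rw [h]
  exact hasTemperateGrowth_affine _ _

lemma antilipschitz_dilateShift (t : ℝ) (ht : 0 < t) (x : Euc n) :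
    AntilipschitzWith (⟨t, ht.le⟩ : ℝ≥0) (fun y : Euc n => t⁻¹ • (x - y)) := by
  apply AntilipschitzWith.of_le_mul_dist
  intro y z
  have h : dist (t⁻¹ • (x - y)) (t⁻¹ • (x - z)) = t⁻¹ * dist y z := by
    rw [dist_smul₀, Real.norm_eq_abs, dist_sub_left, abs_of_pos (inv_pos.2 ht)]
  rw [h]
  show dist y z ≤ t * (t⁻¹ * dist y z)
  rw [← mul_assoc, mul_inv_cancel₀ ht.ne', one_mul]

/-- The Schwartz function `y ↦ t^{-n} Φ((x - y)/t) = Φ_t(x - y)`. -/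
def dilateShift (Φ : 𝓢(Euc n, ℝ)) (t : ℝ) (ht : 0 < t) (x : Euc n) : 𝓢(Euc n, ℝ) :=
  (t ^ n)⁻¹ • SchwartzMap.compCLMOfAntilipschitz ℝ (hasTemperateGrowth_dilateShift t x)
    (antilipschitz_dilateShift t ht x) Φ

@[simp] lemma dilateShift_apply (Φ : 𝓢(Euc n, ℝ)) (t : ℝ) (ht : 0 < t) (x y : Euc n) :
    dilateShift Φ t ht x y = (t ^ n)⁻¹ * Φ (t⁻¹ • (x - y)) := rfl

/-- Tempered distributions on `ℝⁿ`. -/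
abbrev Distribution (n : ℕ) := 𝓢(Euc n, ℝ) →L[ℝ] ℝ

/-- The convolution `(f ∗ Φ_t)(x)` of a tempered distribution `f` with `Φ_t`. -/
def distConv (f : Distribution n) (Φ : 𝓢(Euc n, ℝ)) (t : ℝ) (ht : 0 < t) (x : Euc n) : ℝ :=
  f (dilateShift Φ t ht x)

/-- The radial maximal function `M_{Φ,0} f`. -/
def radialMax (f : Distribution n) (Φ : 𝓢(Euc n, ℝ)) (x : Euc n) : ℝ≥0∞ :=
  ⨆ (t : ℝ) (ht : 0 < t), (‖distConv f Φ t ht x‖₊ : ℝ≥0∞)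

/-- The partial derivative (as an operator on Schwartz functions) in the direction of the
`i`-th standard basis vector. -/
def basisPDeriv (i : Fin n) : 𝓢(Euc n, ℝ) →L[ℝ] 𝓢(Euc n, ℝ) :=
  LineDeriv.lineDerivOpCLM ℝ 𝓢(Euc n, ℝ) (EuclideanSpace.single i (1 : ℝ))

/-- The multi-index partial derivative `D^β` of a Schwartz function. -/
def mDeriv (β : Fin n → ℕ) (Φ : 𝓢(Euc n, ℝ)) : 𝓢(Euc n, ℝ) :=
  (List.finRange n).foldr (fun i Ψ => (fun Ψ' => basisPDeriv i Ψ')^[β i] Ψ) Φ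

/-- The collection `𝓢_N` of Schwartz functions all of whose seminorms
`‖Φ‖_{α,β} = sup_x |x^α D^β Φ(x)|` with `|α|, |β| ≤ N` are at most 1. -/
def schwartzSetN (N : ℕ) : Set 𝓢(Euc n, ℝ) :=
  {Φ | ∀ α β : Fin n → ℕ, (∑ i, α i) ≤ N → (∑ i, β i) ≤ N →
    ∀ x : Euc n, |(∏ i, x i ^ α i) * mDeriv β Φ x| ≤ 1}

/-- The grand maximal function `𝓜_N f`. -/
def grandMax (N : ℕ) (f : Distribution n) (x : Euc n) : ℝ≥0∞ :=
  ⨆ (Φ : 𝓢(Euc n, ℝ)) (_ : Φ ∈ schwartzSetN N) (t : ℝ) (ht : 0 < t),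
    (‖distConv f Φ t ht x‖₊ : ℝ≥0∞)

/-- The `H^{p(·)}` quasi-norm `‖𝓜_N f‖_{p(·)}`. -/
def hardyNorm (p : Euc n → ℝ) (N : ℕ) (f : Distribution n) : ℝ≥0∞ :=
  luxNorm p (grandMax N f)

/-- The distribution `F` is represented by the locally integrable function `g`. -/
def Represents (F : Distribution n) (g : Euc n → ℝ) : Prop :=
  ∀ φ : 𝓢(Euc n, ℝ), F φ = ∫ x, g x * φ x

/-- The convolution `(g ∗ Φ_t)(x)` of a function `g` with `Φ_t`. -/
def funConv (g : Euc n → ℝ) (Φ : 𝓢(Euc n, ℝ)) (t : ℝ) (x : Euc n) : ℝ :=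
  ∫ y : Euc n, g y * ((t ^ n)⁻¹ * Φ (t⁻¹ • (x - y)))

/-- The radial maximal function `M_{Φ,0} g` of a function `g`. -/
def funRadialMax (g : Euc n → ℝ) (Φ : 𝓢(Euc n, ℝ)) (x : Euc n) : ℝ≥0∞ :=
  ⨆ (t : ℝ) (_ : 0 < t), (‖funConv g Φ t x‖₊ : ℝ≥0∞)

end Schwartz

section Atoms

/-- The (ℝ≥0∞-valued) characteristic function of the closed ball `B(x₀, r)`. -/
def ballInd (x₀ : Euc n) (r : ℝ) : Euc n → ℝ≥0∞ := (closedBall x₀ r).indicator 1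

/-- `‖χ_B‖_{p(·)}` for the ball `B = B(x₀,r)`. -/
def ballNorm (p : Euc n → ℝ) (x₀ : Euc n) (r : ℝ) : ℝ≥0∞ := luxNorm p (ballInd x₀ r)

/-- A `(p(·), ∞)` atom supported on the ball `B(x₀, r)`. -/
structure IsAtomInf (p : Euc n → ℝ) (p₀ : ℝ) (a : Euc n → ℝ) (x₀ : Euc n) (r : ℝ) : Prop where
  meas : Measurable a
  r_pos : 0 < r
  supp : ∀ x ∉ closedBall x₀ r, a x = 0
  size : ∀ᵐ x ∂(volume : Measure (Euc n)), (‖a x‖₊ : ℝ≥0∞) ≤ (ballNorm p x₀ r)⁻¹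
  moments : ∀ α : Fin n → ℕ, ((∑ i, α i : ℕ) : ℤ) ≤ ⌊(n : ℝ) * (1 / p₀ - 1)⌋ →
    ∫ x : Euc n, a x * ∏ i, (x i) ^ α i = 0

/-- A `(p(·), q)` atom supported on the ball `B(x₀, r)`. -/
structure IsAtomQ (p : Euc n → ℝ) (p₀ q : ℝ) (a : Euc n → ℝ) (x₀ : Euc n) (r : ℝ) : Prop where
  meas : Measurable a
  r_pos : 0 < r
  supp : ∀ x ∉ closedBall x₀ r, a x = 0
  size : (∫⁻ x, (‖a x‖₊ : ℝ≥0∞) ^ q) ^ (1 / q) ≤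
    (volume (closedBall x₀ r)) ^ (1 / q) * (ballNorm p x₀ r)⁻¹
  moments : ∀ α : Fin n → ℕ, ((∑ i, α i : ℕ) : ℤ) ≤ ⌊(n : ℝ) * (1 / p₀ - 1)⌋ →
    ∫ x : Euc n, a x * ∏ i, (x i) ^ α i = 0

/-- The function `Σ_j λ_j χ_{B_j} / ‖χ_{B_j}‖_{p(·)}` associated to an atomic decomposition. -/
def atomSumFn (p : Euc n → ℝ) (lam : ℕ → ℝ) (x₀ : ℕ → Euc n) (r : ℕ → ℝ) : Euc n → ℝ≥0∞ :=
  fun x => ∑' j, ENNReal.ofReal (lam j) * (ballNorm p (x₀ j) (r j))⁻¹ * ballInd (x₀ j) (r j) x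

end Atoms

section Weights

/-- `w` is an `A₁` weight with constant (at most) `A`. -/
def IsA1 (w : Euc n → ℝ) (A : ℝ) : Prop :=
  Measurable w ∧ LocallyIntegrable w volume ∧
    (∀ᵐ x ∂(volume : Measure (Euc n)), 0 < w x) ∧
    ∀ᵐ x ∂(volume : Measure (Euc n)), maximalOp w x ≤ ENNReal.ofReal A * ENNReal.ofReal (w x)

/-- `w` satisfies the reverse Hölder inequality with exponent `s` and constant (at most) `A`. -/
def IsRH (w : Euc n → ℝ) (s A : ℝ) : Prop :=
  ∀ (x : Euc n) (r : ℝ), 0 < r →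
    ((volume (closedBall x r))⁻¹ * ∫⁻ y in closedBall x r, ENNReal.ofReal (w y) ^ s) ^ (1 / s) ≤
      ENNReal.ofReal A *
        ((volume (closedBall x r))⁻¹ * ∫⁻ y in closedBall x r, ENNReal.ofReal (w y))

/-- The conjugate exponent `s' = s/(s-1)`. -/
def conjExp (s : ℝ) : ℝ := s / (s - 1)

end Weights


/-! ### Auxiliary infrastructure for Statement 10 -/

section Aux10

open EuclideanSpace in
/-- Plain directional derivative along the `i`-th basis vector. -/
def pdv (i : Fin n) (h : Euc n → ℝ) : Euc n → ℝ :=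
  fun y => fderiv ℝ h y (EuclideanSpace.single i (1 : ℝ))

/-- Iterated plain directional derivatives along a list of directions. -/
def cderivL (l : List (Fin n)) (h : Euc n → ℝ) : Euc n → ℝ := l.foldr pdv h

/-- Iterated `basisPDeriv` along a list of directions. -/
def applyL (l : List (Fin n)) (G : 𝓢(Euc n, ℝ)) : 𝓢(Euc n, ℝ) :=
  l.foldr (fun i G => basisPDeriv i G) G

@[simp] lemma cderivL_nil (h : Euc n → ℝ) : cderivL [] h = h := rfl
@[simp] lemma cderivL_cons (i : Fin n) (l : List (Fin n)) (h : Euc n → ℝ) :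
    cderivL (i :: l) h = pdv i (cderivL l h) := rfl
@[simp] lemma applyL_nil (G : 𝓢(Euc n, ℝ)) : applyL [] G = G := rfl
@[simp] lemma applyL_cons (i : Fin n) (l : List (Fin n)) (G : 𝓢(Euc n, ℝ)) :
    applyL (i :: l) G = basisPDeriv i (applyL l G) := rfl

lemma cderivL_append (l₁ l₂ : List (Fin n)) (h : Euc n → ℝ) :
    cderivL (l₁ ++ l₂) h = cderivL l₁ (cderivL l₂ h) := by
  simp [cderivL, List.foldr_append]

lemma coe_basisPDeriv (i : Fin n) (G : 𝓢(Euc n, ℝ)) : ⇑(basisPDeriv i G) = pdv i ⇑G := by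
  funext x
  exact SchwartzMap.lineDerivOp_apply_eq_fderiv _ G x

lemma coe_applyL (l : List (Fin n)) (G : 𝓢(Euc n, ℝ)) : ⇑(applyL l G) = cderivL l ⇑G := by
  induction l with
  | nil => rfl
  | cons i l ih => rw [applyL_cons, coe_basisPDeriv, ih, cderivL_cons]

lemma pdv_contDiff {h : Euc n → ℝ} (hh : ContDiff ℝ (⊤ : ℕ∞) h) (i : Fin n) :
    ContDiff ℝ (⊤ : ℕ∞) (pdv i h) := by
  have heq : pdv i h = fun y =>
      (ContinuousLinearMap.apply ℝ ℝ (EuclideanSpace.single i (1 : ℝ))) (fderiv ℝ h y) := rfl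
  rw [heq]
  exact (ContinuousLinearMap.apply ℝ ℝ _).contDiff.comp
    (hh.fderiv_right (m := (⊤ : ℕ∞)) (by simp))

lemma cderivL_contDiff {h : Euc n → ℝ} (hh : ContDiff ℝ (⊤ : ℕ∞) h) (l : List (Fin n)) :
    ContDiff ℝ (⊤ : ℕ∞) (cderivL l h) := by
  induction l with
  | nil => exact hh
  | cons i l ih => exact pdv_contDiff ih i

end Aux10

section Aux10b

lemma basisPDeriv_comm (i j : Fin n) (G : 𝓢(Euc n, ℝ)) :
    basisPDeriv i (basisPDeriv j G) = basisPDeriv j (basisPDeriv i G) := by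
  ext u
  have hcoe : ∀ (a b : Fin n), basisPDeriv a (basisPDeriv b G) u =
      fderiv ℝ (fun y => fderiv ℝ (⇑G) y (EuclideanSpace.single b (1:ℝ))) u
        (EuclideanSpace.single a (1:ℝ)) := by
    intro a b
    have h1 : ⇑(basisPDeriv a (basisPDeriv b G)) = pdv a (pdv b ⇑G) := by
      rw [coe_basisPDeriv, coe_basisPDeriv]
    rw [show basisPDeriv a (basisPDeriv b G) u = (⇑(basisPDeriv a (basisPDeriv b G))) u from rfl,
      h1]
    rfl
  rw [hcoe, hcoe]
  set v := EuclideanSpace.single j (1:ℝ)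
  set w := EuclideanSpace.single i (1:ℝ)
  have hG2 : ContDiffAt ℝ 2 (⇑G) u := (G.smooth 2).contDiffAt
  have hsym : IsSymmSndFDerivAt ℝ (⇑G) u :=
    hG2.isSymmSndFDerivAt (by simp [minSmoothness_of_isRCLikeNormedField])
  have hdiff : DifferentiableAt ℝ (fderiv ℝ (⇑G)) u := by
    have := (G.smooth (⊤ : ℕ∞)).fderiv_right (m := (⊤ : ℕ∞)) (by simp)
    exact this.differentiable (by simp) u
  have happ : ∀ (m : Euc n), fderiv ℝ (fun y => fderiv ℝ (⇑G) y m) u =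
      (ContinuousLinearMap.apply ℝ ℝ m).comp (fderiv ℝ (fderiv ℝ (⇑G)) u) := by
    intro m
    have : (fun y => fderiv ℝ (⇑G) y m) =
        (ContinuousLinearMap.apply ℝ ℝ m) ∘ (fderiv ℝ (⇑G)) := rfl
    rw [this]
    rw [fderiv_comp u (ContinuousLinearMap.apply ℝ ℝ m).differentiableAt hdiff,
      ContinuousLinearMap.fderiv]
  rw [happ, happ]
  simpa using hsym w v

lemma applyL_perm {l l' : List (Fin n)} (hp : l.Perm l') (G : 𝓢(Euc n, ℝ)) :
    applyL l G = applyL l' G := by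
  induction hp generalizing G with
  | nil => rfl
  | cons x _ ih => simp [applyL_cons, ih]
  | swap x y l => simp [applyL_cons, basisPDeriv_comm]
  | trans _ _ ih1 ih2 => rw [ih1, ih2]

/-- The canonical list of directions associated to a multi-index. -/
def Jlist (β : Fin n → ℕ) : List (Fin n) :=
  (List.finRange n).flatMap fun i => List.replicate (β i) i

lemma applyL_replicate (k : ℕ) (i : Fin n) (G : 𝓢(Euc n, ℝ)) :
    applyL (List.replicate k i) G = (fun G' => basisPDeriv i G')^[k] G := by
  induction k generalizing G with
  | zero => rfl
  | succ k ih =>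
      rw [List.replicate_succ, applyL_cons, ih, ← Function.iterate_succ_apply' (fun G' => basisPDeriv i G')]

lemma applyL_flatMap (ms : List (Fin n)) (f : Fin n → List (Fin n)) (G : 𝓢(Euc n, ℝ)) :
    applyL (ms.flatMap f) G = ms.foldr (fun i G' => applyL (f i) G') G := by
  induction ms generalizing G with
  | nil => rfl
  | cons j ms ih =>
      rw [List.flatMap_cons]
      have : applyL (f j ++ ms.flatMap f) G = applyL (f j) (applyL (ms.flatMap f) G) := by
        simp [applyL, List.foldr_append]
      rw [this, ih, List.foldr_cons]

lemma mDeriv_eq_applyL (β : Fin n → ℕ) (G : 𝓢(Euc n, ℝ)) :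
    mDeriv β G = applyL (Jlist β) G := by
  rw [Jlist, applyL_flatMap, mDeriv]
  congr 1
  funext i G'
  rw [applyL_replicate]

lemma count_Jlist (β : Fin n → ℕ) (i : Fin n) : (Jlist β).count i = β i := by
  have key : ∀ (ms : List (Fin n)), ms.Nodup →
      (ms.flatMap fun j => List.replicate (β j) j).count i =
        if i ∈ ms then β i else 0 := by
    intro ms
    induction ms with
    | nil => simp
    | cons j ms ih =>
        intro hnd
        rw [List.flatMap_cons, List.count_append, ih (List.nodup_cons.1 hnd).2]
        rcases eq_or_ne i j with rfl | hij
        · have : i ∉ ms := (List.nodup_cons.1 hnd).1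
          simp [this, List.count_replicate]
        · simp [List.count_replicate, hij, Ne.symm hij]
  rw [Jlist, key (List.finRange n) (List.nodup_finRange n)]
  simp [List.mem_finRange]

lemma sum_count_eq_length (l : List (Fin n)) : ∑ i, l.count i = l.length := by
  induction l with
  | nil => simp
  | cons a l ih =>
      have : ∀ i : Fin n, (a :: l).count i = l.count i + if a = i then 1 else 0 := by
        intro i
        rcases eq_or_ne a i with rfl | h
        · simp [List.count_cons_self]
        · simp [List.count_cons_of_ne (Ne.symm h) , h]
  
      simp only [this]
      rw [Finset.sum_add_distrib, ih, Finset.sum_ite_eq Finset.univ a (fun _ => 1)]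
      simp

lemma applyL_eq_mDeriv (l : List (Fin n)) (G : 𝓢(Euc n, ℝ)) :
    applyL l G = mDeriv (fun i => l.count i) G := by
  rw [mDeriv_eq_applyL]
  apply applyL_perm
  rw [List.perm_iff_count]
  intro i
  rw [count_Jlist]

end Aux10b

section Aux10c

lemma schwartzSetN_bound {N : ℕ} {Φ : 𝓢(Euc n, ℝ)} (hΦ : Φ ∈ schwartzSetN N)
    (l : List (Fin n)) (hl : l.length ≤ N) (α : Fin n → ℕ) (hα : (∑ i, α i) ≤ N)
    (ξ : Euc n) : |(∏ i, ξ i ^ α i) * cderivL l (⇑Φ) ξ| ≤ 1 := by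
  have h1 : cderivL l ⇑Φ = ⇑(applyL l Φ) := (coe_applyL l Φ).symm
  rw [h1, applyL_eq_mDeriv]
  exact hΦ α _ hα (by rw [sum_count_eq_length]; exact hl) ξ

lemma schwartzSetN_abs_le_one {N : ℕ} {Φ : 𝓢(Euc n, ℝ)} (hΦ : Φ ∈ schwartzSetN N)
    (l : List (Fin n)) (hl : l.length ≤ N) (ξ : Euc n) : |cderivL l (⇑Φ) ξ| ≤ 1 := by
  have := schwartzSetN_bound hΦ l hl (fun _ => 0) (by simp) ξ
  simpa using this

lemma schwartzSetN_decay (hn : 1 ≤ n) {N : ℕ} {Φ : 𝓢(Euc n, ℝ)} (hΦ : Φ ∈ schwartzSetN N)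
    (l : List (Fin n)) (hl : l.length ≤ N) (m : ℕ) (hm : m ≤ N) (ξ : Euc n) :
    ‖ξ‖ ^ m * |cderivL l (⇑Φ) ξ| ≤ (n : ℝ) ^ m := by
  haveI : Nonempty (Fin n) := ⟨⟨0, hn⟩⟩
  obtain ⟨i, -, hi⟩ := Finset.exists_max_image Finset.univ (fun i => |ξ i|) Finset.univ_nonempty
  have hn1 : (1 : ℝ) ≤ (n : ℝ) := by exact_mod_cast hn
  have hξi : ‖ξ‖ ≤ (n : ℝ) * |ξ i| := by
    have hsum : ∑ j, ‖ξ j‖ ^ 2 ≤ (n : ℝ) * |ξ i| ^ 2 := by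
      have hjj : ∀ j : Fin n, ‖ξ j‖ ^ 2 ≤ |ξ i| ^ 2 := by
        intro j
        rw [Real.norm_eq_abs]
        exact pow_le_pow_left₀ (abs_nonneg _) (hi j (Finset.mem_univ j)) 2
      calc ∑ j, ‖ξ j‖ ^ 2 ≤ ∑ _j : Fin n, |ξ i| ^ 2 := Finset.sum_le_sum fun j _ => hjj j
        _ = (n : ℝ) * |ξ i| ^ 2 := by simp [mul_comm]
    calc ‖ξ‖ = Real.sqrt (∑ j, ‖ξ j‖ ^ 2) := EuclideanSpace.norm_eq ξ
      _ ≤ Real.sqrt ((n : ℝ) * |ξ i| ^ 2) := Real.sqrt_le_sqrt hsum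
      _ = Real.sqrt (n : ℝ) * |ξ i| := by
          rw [Real.sqrt_mul (by positivity), Real.sqrt_sq (abs_nonneg _)]
      _ ≤ (n : ℝ) * |ξ i| := by
          apply mul_le_mul_of_nonneg_right _ (abs_nonneg _)
          calc Real.sqrt (n : ℝ) ≤ Real.sqrt ((n : ℝ) ^ 2) := Real.sqrt_le_sqrt (by nlinarith)
            _ = (n : ℝ) := Real.sqrt_sq (by positivity)
  have hkey : |ξ i| ^ m * |cderivL l (⇑Φ) ξ| ≤ 1 := by
    have hb := schwartzSetN_bound hΦ l hl (fun j => if j = i then m else 0)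
      (by rw [Finset.sum_ite_eq' Finset.univ i (fun _ => m)]; simpa using hm) ξ
    have hprod : (∏ j, ξ j ^ (if j = i then m else 0)) = ξ i ^ m := by
      have hpt : ∀ j : Fin n, ξ j ^ (if j = i then m else 0) = if j = i then ξ i ^ m else 1 := by
        intro j
        rcases eq_or_ne j i with rfl | h
        · simp
        · simp [h]
      rw [Finset.prod_congr rfl fun j _ => hpt j,
        Finset.prod_ite_eq' Finset.univ i fun _ => ξ i ^ m]
      simp
    rw [hprod, abs_mul, abs_pow] at hb
    exact hb
  calc ‖ξ‖ ^ m * |cderivL l (⇑Φ) ξ|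
      ≤ ((n : ℝ) * |ξ i|) ^ m * |cderivL l (⇑Φ) ξ| := by
        apply mul_le_mul_of_nonneg_right _ (abs_nonneg _)
        exact pow_le_pow_left₀ (norm_nonneg _) hξi m
    _ = (n : ℝ) ^ m * (|ξ i| ^ m * |cderivL l (⇑Φ) ξ|) := by rw [mul_pow]; ring
    _ ≤ (n : ℝ) ^ m * 1 := mul_le_mul_of_nonneg_left hkey (by positivity)
    _ = (n : ℝ) ^ m := mul_one _

lemma abs_cderivL_le_iFD {h : Euc n → ℝ} (hh : ContDiff ℝ (⊤ : ℕ∞) h) (l : List (Fin n))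
    (w : Euc n) : |cderivL l h w| ≤ ‖iteratedFDeriv ℝ l.length h w‖ := by
  induction l using List.reverseRecOn generalizing h with
  | nil => simp [norm_iteratedFDeriv_zero, Real.norm_eq_abs]
  | append_singleton l a ih =>
      have h1 : cderivL (l ++ [a]) h = cderivL l (pdv a h) := by
        rw [cderivL_append]; rfl
      rw [h1]
      have h2 := ih (pdv_contDiff hh a)
      refine h2.trans ?_
      -- ‖iFD k (pdv a h) w‖ ≤ ‖iFD (k+1) h w‖
      have h3 : pdv a h = (ContinuousLinearMap.apply ℝ ℝ (EuclideanSpace.single a (1:ℝ))) ∘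
          (fderiv ℝ h) := rfl
      have hfd : ContDiff ℝ (⊤ : ℕ∞) (fderiv ℝ h) := hh.fderiv_right (m := (⊤ : ℕ∞)) (by simp)
      rw [h3, ContinuousLinearMap.iteratedFDeriv_comp_left _ (hfd.contDiffAt (x := w)) (by exact_mod_cast le_top)]
      have h4 : ‖(ContinuousLinearMap.apply ℝ ℝ (EuclideanSpace.single a (1:ℝ)))‖ ≤ 1 := by
        apply ContinuousLinearMap.opNorm_le_bound _ zero_le_one
        intro L
        rw [one_mul]
        calc ‖(ContinuousLinearMap.apply ℝ ℝ (EuclideanSpace.single a (1:ℝ))) L‖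
            = ‖L (EuclideanSpace.single a (1:ℝ))‖ := rfl
          _ ≤ ‖L‖ * ‖EuclideanSpace.single a (1:ℝ)‖ := L.le_opNorm _
          _ = ‖L‖ := by rw [EuclideanSpace.norm_single]; simp
      calc ‖(ContinuousLinearMap.apply ℝ ℝ (EuclideanSpace.single a (1:ℝ))).compContinuousMultilinearMap
            (iteratedFDeriv ℝ l.length (fderiv ℝ h) w)‖
          ≤ ‖(ContinuousLinearMap.apply ℝ ℝ (EuclideanSpace.single a (1:ℝ)))‖ *
            ‖iteratedFDeriv ℝ l.length (fderiv ℝ h) w‖ :=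
            ContinuousLinearMap.norm_compContinuousMultilinearMap_le _ _
        _ ≤ 1 * ‖iteratedFDeriv ℝ l.length (fderiv ℝ h) w‖ :=
            mul_le_mul_of_nonneg_right h4 (norm_nonneg _)
        _ = ‖iteratedFDeriv ℝ (l.length + 1) h w‖ := by
            rw [one_mul, norm_iteratedFDeriv_fderiv]
        _ = ‖iteratedFDeriv ℝ (l ++ [a]).length h w‖ := by rw [List.length_append, List.length_singleton]

lemma tsupport_cderivL_subset (l : List (Fin n)) (h : Euc n → ℝ) :
    tsupport (cderivL l h) ⊆ tsupport h := by
  induction l with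
  | nil => exact subset_rfl
  | cons i l ih =>
      refine subset_trans ?_ ih
      rw [cderivL_cons]
      have : Function.support (pdv i (cderivL l h)) ⊆ tsupport (cderivL l h) := by
        intro w hw
        have : fderiv ℝ (cderivL l h) w ≠ 0 := by
          intro hcontra
          apply hw
          show fderiv ℝ (cderivL l h) w _ = 0
          rw [hcontra]; rfl
        exact support_fderiv_subset ℝ (f := cderivL l h) this
      exact closure_minimal this isClosed_closure

lemma cderivL_eq_zero_of_nmem {h : Euc n → ℝ} (l : List (Fin n)) {w : Euc n}
    (hw : w ∉ tsupport h) : cderivL l h w = 0 := by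
  have := tsupport_cderivL_subset l h
  exact image_eq_zero_of_notMem_tsupport (fun hc => hw (this hc))

lemma hasTemperateGrowth_of_compSupp {g : Euc n → ℝ} (hg : ContDiff ℝ (⊤ : ℕ∞) g)
    (hsupp : HasCompactSupport g) : Function.HasTemperateGrowth g := by
  refine ⟨hg, fun N => ?_⟩
  obtain ⟨C, hC⟩ := Continuous.bounded_above_of_compact_support
    (ContDiff.continuous_iteratedFDeriv (by exact_mod_cast le_top) hg)
    (hsupp.iteratedFDeriv N)
  exact ⟨0, max C 0, fun x => by rw [pow_zero, mul_one]; exact (hC x).trans (le_max_left _ _)⟩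

lemma compSupp_cderivL_bound {g : Euc n → ℝ} (hg : ContDiff ℝ (⊤ : ℕ∞) g)
    (hsupp : HasCompactSupport g) (N : ℕ) :
    ∃ C : ℝ, 0 ≤ C ∧ ∀ l : List (Fin n), l.length ≤ N → ∀ w, |cderivL l g w| ≤ C := by
  have hex : ∀ k : ℕ, ∃ C, 0 ≤ C ∧ ∀ w, ‖iteratedFDeriv ℝ k g w‖ ≤ C := by
    intro k
    obtain ⟨C, hC⟩ := Continuous.bounded_above_of_compact_support
      (ContDiff.continuous_iteratedFDeriv (by exact_mod_cast le_top) hg)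
      (hsupp.iteratedFDeriv k)
    exact ⟨max C 0, le_max_right _ _, fun w => (hC w).trans (le_max_left _ _)⟩
  choose Cs hCs0 hCs using hex
  refine ⟨∑ k ∈ Finset.range (N + 1), Cs k, Finset.sum_nonneg fun k _ => hCs0 k,
    fun l hl w => ?_⟩
  calc |cderivL l g w| ≤ ‖iteratedFDeriv ℝ l.length g w‖ := abs_cderivL_le_iFD hg l w
    _ ≤ Cs l.length := hCs _ w
    _ ≤ ∑ k ∈ Finset.range (N + 1), Cs k :=
        Finset.single_le_sum (fun k _ => hCs0 k) (Finset.mem_range.2 (by omega))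

end Aux10c

section Aux10d

variable {α : Type*}

lemma list_abs_sum_le (T : List α) (g : α → ℝ) :
    |(T.map g).sum| ≤ (T.map fun e => |g e|).sum := by
  induction T with
  | nil => simp
  | cons e T ih =>
      simp only [List.map_cons, List.sum_cons]
      exact (abs_add_le _ _).trans (by linarith)

lemma list_sum_map_add (T : List α) (f g : α → ℝ) :
    (T.map fun e => f e + g e).sum = (T.map f).sum + (T.map g).sum := by
  induction T with
  | nil => simp
  | cons e T ih => simp only [List.map_cons, List.sum_cons, ih]; ring

lemma list_sum_contDiff (T : List α) (F : α → Euc n → ℝ)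
    (hF : ∀ e ∈ T, ContDiff ℝ (⊤ : ℕ∞) (F e)) :
    ContDiff ℝ (⊤ : ℕ∞) (fun u => (T.map fun e => F e u).sum) := by
  induction T with
  | nil => simpa using contDiff_const (c := (0:ℝ))
  | cons e T ih =>
      simp only [List.map_cons, List.sum_cons]
      exact (hF e (by simp)).add (ih fun e' he' => hF e' (by simp [he']))

lemma pdv_list_sum (i : Fin n) (T : List α) (F : α → Euc n → ℝ)
    (hF : ∀ e ∈ T, ContDiff ℝ (⊤ : ℕ∞) (F e)) :
    pdv i (fun u => (T.map fun e => F e u).sum) =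
      fun u => (T.map fun e => pdv i (F e) u).sum := by
  induction T with
  | nil =>
      funext u
      simp only [List.map_nil, List.sum_nil, pdv]
      rw [fderiv_const_apply]
      simp
  | cons e T ih =>
      funext u
      simp only [List.map_cons, List.sum_cons]
      have h1 : pdv i (fun u => F e u + (T.map fun e' => F e' u).sum) u =
          pdv i (F e) u + pdv i (fun u => (T.map fun e' => F e' u).sum) u := by
        unfold pdv
        rw [fderiv_fun_add ((hF e (by simp)).differentiable (by simp)).differentiableAt
          ((list_sum_contDiff T F fun e' he' => hF e' (by simp [he'])).differentiable
            (by simp)).differentiableAt]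
        simp
      rw [h1, ih fun e' he' => hF e' (by simp [he'])]

lemma one_le_coe_n (hn : 1 ≤ n) : (1 : ℝ) ≤ (n : ℝ) := by exact_mod_cast hn

end Aux10d

section Aux10e

lemma abs_coord_le_norm (u : Euc n) (j : Fin n) : |u j| ≤ ‖u‖ := by
  have h1 : ‖u j‖ ^ 2 ≤ ∑ i, ‖u i‖ ^ 2 :=
    Finset.single_le_sum (f := fun i => ‖u i‖ ^ 2) (fun i _ => sq_nonneg _) (Finset.mem_univ j)
  calc |u j| = Real.sqrt (‖u j‖ ^ 2) := by
        rw [Real.sqrt_sq (norm_nonneg _), Real.norm_eq_abs]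
    _ ≤ Real.sqrt (∑ i, ‖u i‖ ^ 2) := Real.sqrt_le_sqrt h1
    _ = ‖u‖ := (EuclideanSpace.norm_eq u).symm

lemma prod_abs_pow_le_norm_pow (u : Euc n) (α : Fin n → ℕ) :
    (∏ j, |u j| ^ α j) ≤ ‖u‖ ^ (∑ j, α j) := by
  rw [← Finset.prod_pow_eq_pow_sum]
  exact Finset.prod_le_prod (fun j _ => by positivity)
    (fun j _ => pow_le_pow_left₀ (abs_nonneg _) (abs_coord_le_norm u j) _)

set_option maxHeartbeats 2000000 in
lemma key_exists (hn : 1 ≤ n) (N : ℕ) :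
    ∃ K : ℝ, 1 ≤ K ∧ ∀ (R : ℝ) (x z : Euc n) (t : ℝ) (ht : 0 < t) (Φ : 𝓢(Euc n, ℝ)),
      Φ ∈ schwartzSetN N → 1 < R → ‖z‖ ≤ R → 4 * R ≤ ‖x‖ →
      ∃ (Ψ : 𝓢(Euc n, ℝ)) (s : ℝ) (hs : 0 < s), Ψ ∈ schwartzSetN N ∧
        ∀ y : Euc n, ‖y‖ < 3 * R → K * dilateShift Ψ s hs z y = dilateShift Φ t ht x y := by
  classical
  set b : ContDiffBump (0 : Euc n) := ⟨3/4, 7/8, by norm_num, by norm_num⟩ with hbdef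
  have hg0 : ContDiff ℝ (⊤ : ℕ∞) (⇑b) := b.contDiff
  obtain ⟨Cχ, hCχ0, hCχ⟩ := compSupp_cderivL_bound hg0 b.hasCompactSupport N
  set Cbig : ℝ := Cχ * ((9 * n : ℝ) ^ N + 5 ^ N) with hCbigdef
  have hCbig0 : 0 ≤ Cbig := by positivity
  set K : ℝ := 2 ^ N * Cbig + 1 with hKdef
  have h2NC : (0:ℝ) ≤ 2 ^ N * Cbig := by positivity
  have hK1 : 1 ≤ K := by rw [hKdef]; linarith
  have hK0 : 0 < K := by linarith
  have hKinv0 : 0 < K⁻¹ := by positivity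
  refine ⟨K, hK1, ?_⟩
  intro R x z t ht Φ hΦ hR hz hx
  have hRpos : (0:ℝ) < R := by linarith
  have h4R : (0:ℝ) < 4 * R := by linarith
  -- the scale
  set s : ℝ := min t R with hsdef
  have hs : 0 < s := lt_min ht hRpos
  have hst : s ≤ t := min_le_left _ _
  have hsR : s ≤ R := min_le_right _ _
  have hsn : (0:ℝ) < s ^ n := by positivity
  have htn : (0:ℝ) < t ^ n := by positivity
  -- the cutoff
  set χfun : Euc n → ℝ := fun y => b ((4 * R)⁻¹ • y) with hχdef
  have hχsmooth : ContDiff ℝ (⊤ : ℕ∞) χfun := hg0.comp (contDiff_id.const_smul ((4 * R)⁻¹))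
  have hχcs : HasCompactSupport χfun := by
    apply HasCompactSupport.intro (isCompact_closedBall (0 : Euc n) (4 * R))
    intro y hy
    apply b.zero_of_le_dist
    have hyn : 4 * R < ‖y‖ := by
      by_contra hcon
      exact hy (by simpa [Metric.mem_closedBall, dist_zero_right] using not_lt.1 hcon)
    have : dist ((4 * R)⁻¹ • y) (0 : Euc n) = (4 * R)⁻¹ * ‖y‖ := by
      rw [dist_zero_right, norm_smul, Real.norm_eq_abs, abs_of_pos (by positivity)]
    rw [this]
    show b.rOut ≤ _
    have hbr : b.rOut = 7/8 := rfl
    rw [hbr]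
    rw [show (7/8 : ℝ) = (4*R)⁻¹ * (7/8 * (4*R)) by field_simp]
    apply mul_le_mul_of_nonneg_left _ (by positivity)
    nlinarith
  have hχtemp : Function.HasTemperateGrowth χfun := hasTemperateGrowth_of_compSupp hχsmooth hχcs
  set W : 𝓢(Euc n, ℝ) :=
    SchwartzMap.bilinLeftCLM (ContinuousLinearMap.mul ℝ ℝ) hχtemp (dilateShift Φ t ht x) with hWdef
  have hWapp : ∀ y, W y = ((t ^ n)⁻¹ * Φ (t⁻¹ • (x - y))) * χfun y := fun y => rfl
  -- the substitution map
  set ℓm : Euc n → Euc n := fun u => z - s • u with hℓdef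
  have hℓtemp : Function.HasTemperateGrowth ℓm := by
    have h := hasTemperateGrowth_affine (-(s • ContinuousLinearMap.id ℝ (Euc n))) z
    have heq : (fun y : Euc n => (-(s • ContinuousLinearMap.id ℝ (Euc n))) y + z) = ℓm := by
      funext u
      simp only [hℓdef, ContinuousLinearMap.neg_apply, ContinuousLinearMap.smul_apply,
        ContinuousLinearMap.id_apply]
      module
    rwa [heq] at h
  have hℓanti : AntilipschitzWith (⟨s⁻¹, by positivity⟩ : ℝ≥0) ℓm := by
    apply AntilipschitzWith.of_le_mul_dist
    intro u v
    have hd : dist (ℓm u) (ℓm v) = s * dist u v := by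
      simp only [hℓdef]
      rw [dist_sub_left, dist_smul₀, Real.norm_eq_abs, abs_of_pos hs]
    rw [hd]
    show dist u v ≤ s⁻¹ * (s * dist u v)
    rw [← mul_assoc, inv_mul_cancel₀ hs.ne', one_mul]
  set Ψ : 𝓢(Euc n, ℝ) :=
    (K⁻¹ * s ^ n) • (SchwartzMap.compCLMOfAntilipschitz ℝ hℓtemp hℓanti W) with hΨdef
  have hΨapp : ∀ u, Ψ u =
      (K⁻¹ * s ^ n) * (((t ^ n)⁻¹ * Φ (t⁻¹ • (x - (z - s • u)))) * χfun (z - s • u)) := by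
    intro u
    rw [hΨdef, SchwartzMap.smul_apply, smul_eq_mul]
    congr 1
  -- affine data
  set l1 : Euc n → Euc n := fun u => (4 * R)⁻¹ • (z - s • u) with hl1def
  set l2 : Euc n → Euc n := fun u => t⁻¹ • (x - z + s • u) with hl2def
  set a1 : ℝ := -(s * (4 * R)⁻¹) with ha1def
  set a2 : ℝ := s * t⁻¹ with ha2def
  have ha1abs : |a1| ≤ 1 := by
    rw [ha1def, abs_neg, abs_of_pos (by positivity)]
    rw [show (1:ℝ) = (4*R) * (4*R)⁻¹ by field_simp]
    apply mul_le_mul_of_nonneg_right _ (by positivity)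
    linarith
  have ha2abs : |a2| ≤ 1 := by
    rw [ha2def, abs_of_pos (by positivity)]
    rw [show (1:ℝ) = t * t⁻¹ by field_simp]
    exact mul_le_mul_of_nonneg_right hst (by positivity)
  set termf : ℝ → List (Fin n) → List (Fin n) → Euc n → ℝ :=
    fun c γ δ u => c * cderivL γ (⇑b) (l1 u) * cderivL δ (⇑Φ) (l2 u) with htermfdef
  have hl1smooth : ContDiff ℝ (⊤ : ℕ∞) l1 :=
    (contDiff_const.sub (contDiff_id.const_smul s)).const_smul ((4 * R)⁻¹)
  have hl2smooth : ContDiff ℝ (⊤ : ℕ∞) l2 :=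
    (contDiff_const.add (contDiff_id.const_smul s)).const_smul t⁻¹
  have hterm_smooth : ∀ c γ δ, ContDiff ℝ (⊤ : ℕ∞) (termf c γ δ) := by
    intro c γ δ
    exact (contDiff_const.mul ((cderivL_contDiff hg0 γ).comp hl1smooth)).mul
      ((cderivL_contDiff (Φ.smooth (⊤ : ℕ∞)) δ).comp hl2smooth)
  -- derivative of a term
  have hpdv_term : ∀ (c : ℝ) (γ δ : List (Fin n)) (i : Fin n),
      pdv i (termf c γ δ) =
        fun u => termf (c * a1) (i :: γ) δ u + termf (c * a2) γ (i :: δ) u := by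
    intro c γ δ i
    funext u
    have hAder : HasFDerivAt (fun u : Euc n => cderivL γ (⇑b) (l1 u))
        ((fderiv ℝ (cderivL γ ⇑b) (l1 u)).comp (a1 • ContinuousLinearMap.id ℝ (Euc n))) u := by
      have hinner : HasFDerivAt l1 (a1 • ContinuousLinearMap.id ℝ (Euc n)) u := by
        have h1 : HasFDerivAt (fun u : Euc n => (4 * R)⁻¹ • z + a1 • u)
            (a1 • ContinuousLinearMap.id ℝ (Euc n)) u :=
          ((hasFDerivAt_id u).const_smul a1).const_add ((4 * R)⁻¹ • z)
        have h2 : l1 = fun u : Euc n => (4 * R)⁻¹ • z + a1 • u := by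
          funext u
          simp only [hl1def, ha1def]
          module
        rw [h2]
        exact h1
      exact ((((cderivL_contDiff hg0 γ).differentiable (by simp)) (l1 u)).hasFDerivAt).comp u hinner
    have hBder : HasFDerivAt (fun u : Euc n => cderivL δ (⇑Φ) (l2 u))
        ((fderiv ℝ (cderivL δ ⇑Φ) (l2 u)).comp (a2 • ContinuousLinearMap.id ℝ (Euc n))) u := by
      have hinner : HasFDerivAt l2 (a2 • ContinuousLinearMap.id ℝ (Euc n)) u := by
        have h1 : HasFDerivAt (fun u : Euc n => t⁻¹ • (x - z) + a2 • u)
            (a2 • ContinuousLinearMap.id ℝ (Euc n)) u :=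
          ((hasFDerivAt_id u).const_smul a2).const_add (t⁻¹ • (x - z))
        have h2 : l2 = fun u : Euc n => t⁻¹ • (x - z) + a2 • u := by
          funext u
          simp only [hl2def, ha2def]
          module
        rw [h2]
        exact h1
      exact ((((cderivL_contDiff (Φ.smooth (⊤ : ℕ∞)) δ).differentiable (by simp))
        (l2 u)).hasFDerivAt).comp u hinner
    have hprod : HasFDerivAt (termf c γ δ)
        ((c * cderivL γ (⇑b) (l1 u)) •
            ((fderiv ℝ (cderivL δ ⇑Φ) (l2 u)).comp (a2 • ContinuousLinearMap.id ℝ (Euc n))) +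
          (cderivL δ (⇑Φ) (l2 u)) •
            (c • ((fderiv ℝ (cderivL γ ⇑b) (l1 u)).comp
              (a1 • ContinuousLinearMap.id ℝ (Euc n))))) u := by
      have := (hAder.const_mul c).mul hBder
      exact this
    have hval : pdv i (termf c γ δ) u = fderiv ℝ (termf c γ δ) u (EuclideanSpace.single i 1) := rfl
    rw [hval, hprod.fderiv]
    simp only [ContinuousLinearMap.add_apply, ContinuousLinearMap.smul_apply,
      ContinuousLinearMap.comp_apply, ContinuousLinearMap.id_apply,
      ContinuousLinearMap.map_smul, smul_eq_mul]
    have hA : (fderiv ℝ (cderivL γ ⇑b) (l1 u)) (EuclideanSpace.single i 1) =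
        cderivL (i :: γ) (⇑b) (l1 u) := rfl
    have hB : (fderiv ℝ (cderivL δ ⇑Φ) (l2 u)) (EuclideanSpace.single i 1) =
        cderivL (i :: δ) (⇑Φ) (l2 u) := rfl
    rw [hA, hB, htermfdef]
    ring
  -- base case coercion
  have hΨcoe : ⇑Ψ = termf (K⁻¹ * (s ^ n * (t ^ n)⁻¹)) [] [] := by
    funext u
    rw [hΨapp u]
    simp only [htermfdef, cderivL_nil]
    have hx1 : x - (z - s • u) = x - z + s • u := by module
    have hχ : χfun (z - s • u) = b (l1 u) := by rw [hχdef, hl1def]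
    rw [hx1, hχ]
    show _ = _ * b (l1 u) * Φ (l2 u)
    rw [hl2def]
    ring
  -- representation of iterated derivatives
  have hmain : ∀ l : List (Fin n), ∃ T : List (ℝ × List (Fin n) × List (Fin n)),
      T.length = 2 ^ l.length ∧
      (∀ e ∈ T, |e.1| ≤ K⁻¹ ∧ e.2.1.length ≤ l.length ∧ e.2.2.length ≤ l.length) ∧
      ⇑(applyL l Ψ) = fun u => (T.map fun e => termf e.1 e.2.1 e.2.2 u).sum := by
    intro l
    induction l with
    | nil =>
        refine ⟨[(K⁻¹ * (s ^ n * (t ^ n)⁻¹), [], [])], by simp, ?_, ?_⟩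
        · intro e he
          simp only [List.mem_singleton] at he
          subst he
          refine ⟨?_, by simp, by simp⟩
          have h1 : s ^ n * (t ^ n)⁻¹ ≤ 1 := by
            rw [show (1:ℝ) = t ^ n * (t ^ n)⁻¹ by field_simp]
            exact mul_le_mul_of_nonneg_right (pow_le_pow_left₀ hs.le hst n) (by positivity)
          have h2 : (0:ℝ) ≤ s ^ n * (t ^ n)⁻¹ := by positivity
          rw [abs_of_nonneg (by positivity)]
          calc K⁻¹ * (s ^ n * (t ^ n)⁻¹) ≤ K⁻¹ * 1 :=
                mul_le_mul_of_nonneg_left h1 hKinv0.le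
            _ = K⁻¹ := mul_one _
        · funext u
          rw [applyL_nil, hΨcoe]
          simp
    | cons i l ih =>
        obtain ⟨T, hTlen, hTb, hTeq⟩ := ih
        refine ⟨(T.map fun e => (e.1 * a1, i :: e.2.1, e.2.2)) ++
          (T.map fun e => (e.1 * a2, e.2.1, i :: e.2.2)), ?_, ?_, ?_⟩
        · simp only [List.length_append, List.length_map, hTlen, List.length_cons]
          ring
        · intro e he
          rw [List.mem_append] at he
          rcases he with he | he <;> rw [List.mem_map] at he <;> obtain ⟨e', he', rfl⟩ := he <;>
            obtain ⟨hb1, hb2, hb3⟩ := hTb e' he'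
          · refine ⟨?_, ?_, ?_⟩
            · calc |e'.1 * a1| = |e'.1| * |a1| := abs_mul _ _
                _ ≤ K⁻¹ * 1 := mul_le_mul hb1 ha1abs (abs_nonneg _) hKinv0.le
                _ = K⁻¹ := mul_one _
            · simp only [List.length_cons]; omega
            · simp only [List.length_cons]; omega
          · refine ⟨?_, ?_, ?_⟩
            · calc |e'.1 * a2| = |e'.1| * |a2| := abs_mul _ _
                _ ≤ K⁻¹ * 1 := mul_le_mul hb1 ha2abs (abs_nonneg _) hKinv0.le
                _ = K⁻¹ := mul_one _
            · simp only [List.length_cons]; omega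
            · simp only [List.length_cons]; omega
        · have h0 : ⇑(applyL (i :: l) Ψ) = pdv i ⇑(applyL l Ψ) := by
            rw [applyL_cons, coe_basisPDeriv]
          rw [h0, hTeq, pdv_list_sum i T _ (fun e _ => hterm_smooth _ _ _)]
          funext u
          rw [List.map_append, List.sum_append, List.map_map, List.map_map]
          have hcongr : (T.map fun e => pdv i (termf e.1 e.2.1 e.2.2) u) =
              T.map fun e => termf (e.1 * a1) (i :: e.2.1) e.2.2 u +
                termf (e.1 * a2) e.2.1 (i :: e.2.2) u := by
            apply List.map_congr_left
            intro e _
            rw [hpdv_term]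
          rw [hcongr, list_sum_map_add]
          rfl
  -- membership in the Schwartz class `S_N`
  have hmem : Ψ ∈ schwartzSetN N := by
    intro α β hα hβ u
    have hlen : (Jlist β).length ≤ N := by
      have h1 : ∑ i, (Jlist β).count i = ∑ i, β i := by
        apply Finset.sum_congr rfl
        intro j _
        rw [count_Jlist]
      have h2 := sum_count_eq_length (Jlist β)
      omega
    obtain ⟨T, hTlen, hTb, hTeq⟩ := hmain (Jlist β)
    have hval : mDeriv β Ψ u = (T.map fun e => termf e.1 e.2.1 e.2.2 u).sum := by
      rw [mDeriv_eq_applyL]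
      exact congrFun hTeq u
    rw [hval]
    -- per-term estimate
    have hterm : ∀ (c : ℝ) (γ δ : List (Fin n)), |c| ≤ K⁻¹ → γ.length ≤ N → δ.length ≤ N →
        |(∏ j, u j ^ α j) * termf c γ δ u| ≤ K⁻¹ * Cbig := by
      intro c γ δ hc hγ hδ
      by_cases hsupp : l1 u ∈ tsupport ⇑b
      case neg =>
        have hz0 : cderivL γ (⇑b) (l1 u) = 0 := cderivL_eq_zero_of_nmem γ hsupp
        have : termf c γ δ u = 0 := by rw [htermfdef]; simp [hz0]
        rw [this, mul_zero, abs_zero]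
        positivity
      case pos =>
        have hb78 : ‖l1 u‖ ≤ 7 / 8 := by
          have h1 : l1 u ∈ Metric.closedBall (0 : Euc n) b.rOut := by
            rw [← b.tsupport_eq]; exact hsupp
          have h2 : b.rOut = 7/8 := rfl
          rw [Metric.mem_closedBall, dist_zero_right, h2] at h1
          exact h1
        have hzsu : ‖z - s • u‖ ≤ 7 / 8 * (4 * R) := by
          have h1 : ‖l1 u‖ = (4 * R)⁻¹ * ‖z - s • u‖ := by
            rw [hl1def]
            show ‖(4 * R)⁻¹ • (z - s • u)‖ = _
            rw [norm_smul, Real.norm_eq_abs, abs_of_pos (by positivity)]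
          rw [h1] at hb78
          calc ‖z - s • u‖ = (4 * R) * ((4 * R)⁻¹ * ‖z - s • u‖) := by field_simp
            _ ≤ (4 * R) * (7/8) := mul_le_mul_of_nonneg_left hb78 (by positivity)
            _ = 7/8 * (4 * R) := by ring
        have hsu : s * ‖u‖ ≤ 9 / 2 * R := by
          have h1 : ‖s • u‖ = s * ‖u‖ := by
            rw [norm_smul, Real.norm_eq_abs, abs_of_pos hs]
          have h2 : s • u = z - (z - s • u) := by module
          have h3 : ‖z - (z - s • u)‖ ≤ ‖z‖ + ‖z - s • u‖ := norm_sub_le _ _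
          rw [← h1, h2]
          calc ‖z - (z - s • u)‖ ≤ ‖z‖ + ‖z - s • u‖ := h3
            _ ≤ R + 7/8 * (4 * R) := add_le_add hz hzsu
            _ = 9/2 * R := by ring
        have hbfac : |cderivL γ (⇑b) (l1 u)| ≤ Cχ := hCχ γ hγ _
        set m := ∑ j, α j with hmdef
        have hcore : ‖u‖ ^ m * |cderivL δ (⇑Φ) (l2 u)| ≤ (9 * n : ℝ) ^ N + 5 ^ N := by
          rcases le_total t R with htR | hRt
          · -- small times: s = t
            have hst' : s = t := min_eq_left htR
            have htξ : R / 2 ≤ t * ‖l2 u‖ := by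
              have h1 : t • l2 u = x - (z - s • u) := by
                rw [hl2def]
                show t • (t⁻¹ • (x - z + s • u)) = _
                rw [smul_smul, mul_inv_cancel₀ ht.ne', one_smul]
                module
              have h2 : ‖x‖ - ‖z - s • u‖ ≤ ‖x - (z - s • u)‖ := norm_sub_norm_le _ _
              have h3 : ‖t • l2 u‖ = t * ‖l2 u‖ := by
                rw [norm_smul, Real.norm_eq_abs, abs_of_pos ht]
              have h4 : 7/8 * (4 * R) ≤ 7/8 * ‖x‖ := by nlinarith
              have h5 : t * ‖l2 u‖ = ‖x - (z - s • u)‖ := by rw [← h3, h1]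
              nlinarith
            have hu9 : ‖u‖ ≤ 9 * ‖l2 u‖ := by
              have h1 : t * ‖u‖ ≤ 9 / 2 * R := by rw [hst'] at hsu; exact hsu
              have h2 : t * ‖u‖ ≤ 9 * (t * ‖l2 u‖) := by nlinarith
              nlinarith [norm_nonneg u, norm_nonneg (l2 u)]
            have hm : m ≤ N := hα
            calc ‖u‖ ^ m * |cderivL δ (⇑Φ) (l2 u)|
                ≤ (9 * ‖l2 u‖) ^ m * |cderivL δ (⇑Φ) (l2 u)| :=
                  mul_le_mul_of_nonneg_right
                    (pow_le_pow_left₀ (norm_nonneg _) hu9 m) (abs_nonneg _)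
              _ = 9 ^ m * (‖l2 u‖ ^ m * |cderivL δ (⇑Φ) (l2 u)|) := by rw [mul_pow]; ring
              _ ≤ 9 ^ m * (n : ℝ) ^ m :=
                  mul_le_mul_of_nonneg_left
                    (schwartzSetN_decay hn hΦ δ hδ m hm (l2 u)) (by positivity)
              _ = (9 * n : ℝ) ^ m := by rw [mul_pow]
              _ ≤ (9 * n : ℝ) ^ N := by
                  apply pow_le_pow_right₀ _ hm
                  have := one_le_coe_n hn
                  nlinarith
              _ ≤ (9 * n : ℝ) ^ N + 5 ^ N := le_add_of_nonneg_right (by positivity)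
          · -- large times: s = R
            have hsR' : s = R := min_eq_right hRt
            have hu45 : ‖u‖ ≤ 9 / 2 := by
              have h1 : R * ‖u‖ ≤ 9 / 2 * R := by rw [hsR'] at hsu; exact hsu
              nlinarith
            have hcd1 : |cderivL δ (⇑Φ) (l2 u)| ≤ 1 := schwartzSetN_abs_le_one hΦ δ hδ _
            calc ‖u‖ ^ m * |cderivL δ (⇑Φ) (l2 u)|
                ≤ (9/2) ^ m * 1 := by
                  apply mul_le_mul (pow_le_pow_left₀ (norm_nonneg _) hu45 m) hcd1
                    (abs_nonneg _) (by positivity)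
              _ = (9/2) ^ m := mul_one _
              _ ≤ 5 ^ N := by
                  calc ((9:ℝ)/2) ^ m ≤ 5 ^ m := pow_le_pow_left₀ (by norm_num) (by norm_num) m
                    _ ≤ 5 ^ N := pow_le_pow_right₀ (by norm_num) hα
              _ ≤ (9 * n : ℝ) ^ N + 5 ^ N := le_add_of_nonneg_left (by positivity)
        have hfin : |(∏ j, u j ^ α j) * termf c γ δ u| =
            |c| * |cderivL γ (⇑b) (l1 u)| *
              ((∏ j, |u j| ^ α j) * |cderivL δ (⇑Φ) (l2 u)|) := by
          rw [htermfdef]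
          show |(∏ j, u j ^ α j) * (c * cderivL γ (⇑b) (l1 u) * cderivL δ (⇑Φ) (l2 u))| = _
          rw [abs_mul, abs_mul, abs_mul, Finset.abs_prod]
          have : ∀ j : Fin n, |u j ^ α j| = |u j| ^ α j := fun j => abs_pow _ _
          rw [Finset.prod_congr rfl fun j _ => this j]
          ring
        rw [hfin]
        have hmid : (∏ j, |u j| ^ α j) * |cderivL δ (⇑Φ) (l2 u)| ≤ (9 * n : ℝ) ^ N + 5 ^ N := by
          calc (∏ j, |u j| ^ α j) * |cderivL δ (⇑Φ) (l2 u)|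
              ≤ ‖u‖ ^ m * |cderivL δ (⇑Φ) (l2 u)| :=
                mul_le_mul_of_nonneg_right (prod_abs_pow_le_norm_pow u α) (abs_nonneg _)
            _ ≤ (9 * n : ℝ) ^ N + 5 ^ N := hcore
        calc |c| * |cderivL γ (⇑b) (l1 u)| *
              ((∏ j, |u j| ^ α j) * |cderivL δ (⇑Φ) (l2 u)|)
            ≤ K⁻¹ * Cχ * ((9 * n : ℝ) ^ N + 5 ^ N) := by
              apply mul_le_mul _ hmid (by positivity) (by positivity)
              exact mul_le_mul hc hbfac (abs_nonneg _) hKinv0.le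
          _ = K⁻¹ * Cbig := by rw [hCbigdef]; ring
    -- sum the estimates
    calc |(∏ j, u j ^ α j) * (T.map fun e => termf e.1 e.2.1 e.2.2 u).sum|
        = |(T.map fun e => (∏ j, u j ^ α j) * termf e.1 e.2.1 e.2.2 u).sum| := by
          rw [List.sum_map_mul_left]
      _ ≤ (T.map fun e => |(∏ j, u j ^ α j) * termf e.1 e.2.1 e.2.2 u|).sum :=
          list_abs_sum_le _ _
      _ ≤ (T.map fun e => |(∏ j, u j ^ α j) * termf e.1 e.2.1 e.2.2 u|).length •
            (K⁻¹ * Cbig) := by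
          apply List.sum_le_card_nsmul
          intro a ha
          rw [List.mem_map] at ha
          obtain ⟨e, he, rfl⟩ := ha
          obtain ⟨hb1, hb2, hb3⟩ := hTb e he
          exact hterm e.1 e.2.1 e.2.2 hb1 (hb2.trans hlen) (hb3.trans hlen)
      _ = (2 ^ (Jlist β).length : ℕ) * (K⁻¹ * Cbig) := by
          rw [List.length_map, hTlen, nsmul_eq_mul]
      _ ≤ 2 ^ N * (K⁻¹ * Cbig) := by
          apply mul_le_mul_of_nonneg_right _ (by positivity)
          have h1 : (2:ℝ) ^ (Jlist β).length ≤ 2 ^ N :=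
            pow_le_pow_right₀ (by norm_num) hlen
          calc ((2 ^ (Jlist β).length : ℕ) : ℝ) = 2 ^ (Jlist β).length := by push_cast; ring
            _ ≤ 2 ^ N := h1
      _ = K⁻¹ * (2 ^ N * Cbig) := by ring
      _ ≤ K⁻¹ * K := by
          apply mul_le_mul_of_nonneg_left _ hKinv0.le
          rw [hKdef]; linarith
      _ = 1 := inv_mul_cancel₀ hK0.ne'
  -- conclusion
  refine ⟨Ψ, s, hs, hmem, ?_⟩
  intro y hy
  rw [dilateShift_apply, dilateShift_apply]
  have hu : z - s • (s⁻¹ • (z - y)) = y := by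
    rw [smul_smul, mul_inv_cancel₀ hs.ne', one_smul]
    module
  rw [hΨapp (s⁻¹ • (z - y)), hu]
  have hχ1 : χfun y = 1 := by
    apply b.one_of_mem_closedBall
    rw [Metric.mem_closedBall, dist_zero_right]
    show ‖(4 * R)⁻¹ • y‖ ≤ b.rIn
    have hbr : b.rIn = 3/4 := rfl
    rw [hbr, norm_smul, Real.norm_eq_abs, abs_of_pos (by positivity)]
    rw [show (3/4 : ℝ) = (4*R)⁻¹ * (3 * R) by field_simp]
    exact mul_le_mul_of_nonneg_left hy.le (by positivity)
  rw [hχ1]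
  field_simp

end Aux10e

section Aux10f

lemma luxNorm_mono {p : Euc n → ℝ} (hp : ∀ᵐ x ∂(volume : Measure (Euc n)), 0 ≤ p x)
    {f g : Euc n → ℝ≥0∞} (h : ∀ x, f x ≤ g x) : luxNorm p f ≤ luxNorm p g := by
  apply sInf_le_sInf
  intro l hl
  simp only [Set.mem_setOf_eq] at hl ⊢
  refine le_trans (lintegral_mono_ae ?_) hl
  filter_upwards [hp] with x hx
  exact ENNReal.rpow_le_rpow (ENNReal.div_le_div_right (h x) l) hx

lemma luxNorm_const_mul_le {p : Euc n → ℝ} {c : ℝ≥0∞} (hc0 : c ≠ 0) (hctop : c ≠ ∞)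
    (g : Euc n → ℝ≥0∞) : c * luxNorm p g ≤ luxNorm p (fun x => c * g x) := by
  apply le_sInf
  intro l hl
  simp only [Set.mem_setOf_eq] at hl
  have hdivc : ∀ x, g x / (l / c) = c * g x / l := by
    intro x
    rw [div_eq_mul_inv l c, div_eq_mul_inv,
      ENNReal.mul_inv (Or.inr (by simp [hc0])) (Or.inr (by simp [hctop])), inv_inv,
      div_eq_mul_inv]
    ring
  have hmem : l / c ∈ {l : ℝ≥0∞ | ∫⁻ x, (g x / l) ^ p x ∂volume ≤ 1} := by
    simp only [Set.mem_setOf_eq]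
    refine le_trans (le_of_eq ?_) hl
    apply lintegral_congr
    intro x
    rw [hdivc x]
  calc c * luxNorm p g ≤ c * (l / c) := mul_le_mul_right (sInf_le hmem) c
    _ = l := ENNReal.mul_div_cancel hc0 hctop

lemma ballNorm_ne_zero {p : Euc n → ℝ} {m : ℝ} (hm0 : 0 < m)
    (hpm : ∀ᵐ x ∂(volume : Measure (Euc n)), m ≤ p x) {R : ℝ} (hR : 0 < R) :
    ballNorm p 0 R ≠ 0 := by
  set vol := volume (Metric.closedBall (0 : Euc n) R) with hvoldef
  have hvolpos : 0 < vol :=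
    lt_of_lt_of_le (measure_ball_pos volume 0 hR)
      (measure_mono Metric.ball_subset_closedBall)
  set ν : ℝ≥0∞ := vol ^ (1 / m) with hνdef
  have hν0 : ν ≠ 0 := (ENNReal.rpow_pos_of_nonneg hvolpos (by positivity)).ne'
  have hlower : ∀ l ∈ {l : ℝ≥0∞ | ∫⁻ x, (ballInd (0 : Euc n) R x / l) ^ p x ∂volume ≤ 1},
      min 1 ν ≤ l := by
    intro l hl
    simp only [Set.mem_setOf_eq] at hl
    by_contra hcon
    push_neg at hcon
    have hl1 : l < 1 := lt_of_lt_of_le hcon (min_le_left _ _)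
    have hlν : l < ν := lt_of_lt_of_le hcon (min_le_right _ _)
    have hltop : l ≠ ∞ := hl1.ne_top
    have hae : ∀ᵐ x' ∂(volume.restrict (Metric.closedBall (0 : Euc n) R)),
        l⁻¹ ^ m ≤ (ballInd (0 : Euc n) R x' / l) ^ p x' := by
      filter_upwards [ae_restrict_of_ae hpm, ae_restrict_mem measurableSet_closedBall]
        with x' h1 h2
      have hind : ballInd (0 : Euc n) R x' = 1 := by
        rw [ballInd, Set.indicator_of_mem h2]; rfl
      rw [hind]
      have h1l : (1 : ℝ≥0∞) ≤ 1 / l := by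
        rw [one_div]
        exact ENNReal.one_le_inv.2 hl1.le
      calc l⁻¹ ^ m = (1 / l) ^ m := by rw [one_div]
        _ ≤ (1 / l) ^ p x' := ENNReal.rpow_le_rpow_of_exponent_le h1l h1
    have hbig : l⁻¹ ^ m * vol ≤ ∫⁻ x', (ballInd (0 : Euc n) R x' / l) ^ p x' ∂volume := by
      calc l⁻¹ ^ m * vol
          = ∫⁻ _ in Metric.closedBall (0 : Euc n) R, l⁻¹ ^ m ∂volume :=
            (setLIntegral_const _ _).symm
        _ ≤ ∫⁻ x' in Metric.closedBall (0 : Euc n) R,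
              (ballInd (0 : Euc n) R x' / l) ^ p x' ∂volume := lintegral_mono_ae hae
        _ ≤ _ := setLIntegral_le_lintegral _ _
    have hgt1 : (1 : ℝ≥0∞) < l⁻¹ ^ m * vol := by
      rw [ENNReal.inv_rpow]
      rcases eq_or_ne l 0 with rfl | hl0
      · rw [ENNReal.zero_rpow_of_pos hm0, ENNReal.inv_zero, ENNReal.top_mul hvolpos.ne']
        exact ENNReal.one_lt_top
      · have hlm_lt : l ^ m < vol := by
          calc l ^ m < ν ^ m := ENNReal.rpow_lt_rpow hlν hm0
            _ = vol := by
                rw [hνdef, ← ENNReal.rpow_mul, one_div, inv_mul_cancel₀ hm0.ne',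
                  ENNReal.rpow_one]
        have h1 : l ^ m ≠ 0 :=
          (ENNReal.rpow_pos_of_nonneg (zero_lt_iff.2 hl0) hm0.le).ne'
        have h2 : l ^ m ≠ ∞ := (ENNReal.rpow_lt_top_of_nonneg hm0.le hltop).ne
        rw [mul_comm, ← div_eq_mul_inv]
        exact (ENNReal.lt_div_iff_mul_lt (Or.inl h1) (Or.inl h2)).2 (by rwa [one_mul])
    exact lt_irrefl _ (lt_of_lt_of_le hgt1 (le_trans hbig hl))
  have hle : min 1 ν ≤ ballNorm p 0 R := le_sInf hlower
  have hmin0 : (0 : ℝ≥0∞) < min 1 ν := lt_min one_pos (zero_lt_iff.2 hν0)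
  exact (lt_of_lt_of_le hmin0 hle).ne'

lemma ballNorm_ne_top {p : Euc n → ℝ} {m : ℝ} (hm0 : 0 < m)
    (hpm : ∀ᵐ x ∂(volume : Measure (Euc n)), m ≤ p x) {R : ℝ} (hR : 0 < R) :
    ballNorm p 0 R ≠ ∞ := by
  set vol := volume (Metric.closedBall (0 : Euc n) R) with hvoldef
  have hvoltop : vol < ∞ := measure_closedBall_lt_top
  set l : ℝ≥0∞ := max 1 (vol ^ (1 / m)) with hldef
  have hltop : l < ∞ :=
    max_lt ENNReal.one_lt_top (ENNReal.rpow_lt_top_of_nonneg (by positivity) hvoltop.ne)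
  have hl1 : (1 : ℝ≥0∞) ≤ l := le_max_left _ _
  have hmem : l ∈ {l : ℝ≥0∞ | ∫⁻ x, (ballInd (0 : Euc n) R x / l) ^ p x ∂volume ≤ 1} := by
    simp only [Set.mem_setOf_eq]
    have hptwise : ∀ᵐ x' ∂(volume : Measure (Euc n)),
        (ballInd (0 : Euc n) R x' / l) ^ p x' ≤
          (Metric.closedBall (0 : Euc n) R).indicator (fun _ => l⁻¹ ^ m) x' := by
      filter_upwards [hpm] with x' h1
      by_cases hx' : x' ∈ Metric.closedBall (0 : Euc n) R
      · rw [Set.indicator_of_mem hx']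
        have hind : ballInd (0 : Euc n) R x' = 1 := by
          rw [ballInd, Set.indicator_of_mem hx']; rfl
        rw [hind]
        have hinv1 : (1 : ℝ≥0∞) / l ≤ 1 := by
          rw [one_div]
          exact ENNReal.inv_le_one.2 hl1
        calc (1 / l) ^ p x' ≤ (1 / l) ^ m :=
              ENNReal.rpow_le_rpow_of_exponent_ge hinv1 h1
          _ = l⁻¹ ^ m := by rw [one_div]
      · rw [Set.indicator_of_notMem hx']
        have hind : ballInd (0 : Euc n) R x' = 0 := by
          rw [ballInd, Set.indicator_of_notMem hx']
        rw [hind, ENNReal.zero_div, ENNReal.zero_rpow_of_pos (by linarith)]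
    calc ∫⁻ x', (ballInd (0 : Euc n) R x' / l) ^ p x' ∂volume
        ≤ ∫⁻ x', (Metric.closedBall (0 : Euc n) R).indicator (fun _ => l⁻¹ ^ m) x' ∂volume :=
          lintegral_mono_ae hptwise
      _ = l⁻¹ ^ m * vol := by
          rw [lintegral_indicator measurableSet_closedBall, setLIntegral_const]
      _ ≤ 1 := by
          rw [ENNReal.inv_rpow]
          have hvle : vol ≤ l ^ m := by
            calc vol = (vol ^ (1 / m)) ^ m := by
                  rw [← ENNReal.rpow_mul, one_div, inv_mul_cancel₀ hm0.ne',
                    ENNReal.rpow_one]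
              _ ≤ l ^ m := ENNReal.rpow_le_rpow (le_max_right _ _) hm0.le
          calc (l ^ m)⁻¹ * vol ≤ (l ^ m)⁻¹ * l ^ m := mul_le_mul_right hvle _
            _ ≤ 1 := ENNReal.inv_mul_le_one _
  exact ((sInf_le hmem).trans_lt hltop).ne

end Aux10f
/-- decay of the grand maximal function of a compactly supported
distribution in `H^{p(·)}`. -/
theorem statement10 {n : ℕ} (hn : 1 ≤ n) (p : Euc n → ℝ) (p₀ : ℝ) (hp : IsMP0 p p₀)
    (N : ℕ) (hN : (n : ℝ) / p₀ + n + 1 < N) :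
    ∃ C : ℝ≥0∞, C < ∞ ∧
    ∀ (f : Distribution n) (R : ℝ), 1 < R → hardyNorm p N f < ∞ →
      (∀ φ : 𝓢(Euc n, ℝ), Disjoint (tsupport ⇑φ) (closedBall (0 : Euc n) R) → f φ = 0) →
      ∀ x : Euc n, 4 * R ≤ ‖x‖ →
        grandMax N f x ≤ C * hardyNorm p N f * (ballNorm p 0 R)⁻¹ := by
  obtain ⟨m, hp₀m, hpm⟩ := hp.p₀_lt_essInf
  have hm0 : 0 < m := lt_trans hp.p₀_pos hp₀m
  have hp_nonneg : ∀ᵐ x ∂(volume : Measure (Euc n)), 0 ≤ p x := by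
    filter_upwards [hpm] with x hx; linarith
  obtain ⟨K, hK1, hkey⟩ := key_exists hn N
  have hK0 : (0 : ℝ) < K := by linarith
  refine ⟨ENNReal.ofReal K, ENNReal.ofReal_lt_top, ?_⟩
  intro f R hR hH hsupp x hx
  have hRpos : (0 : ℝ) < R := by linarith
  have hKne0 : ENNReal.ofReal K ≠ 0 := by
    rw [Ne, ENNReal.ofReal_eq_zero]
    push_neg
    exact hK0
  have hKnetop : ENNReal.ofReal K ≠ ∞ := ENNReal.ofReal_ne_top
  -- Step A: pointwise comparison on the ball
  have hA : ∀ z ∈ Metric.closedBall (0 : Euc n) R,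
      grandMax N f x ≤ ENNReal.ofReal K * grandMax N f z := by
    intro z hzball
    have hznorm : ‖z‖ ≤ R := by
      rwa [Metric.mem_closedBall, dist_zero_right] at hzball
    show (⨆ (Φ : 𝓢(Euc n, ℝ)) (_ : Φ ∈ schwartzSetN N) (t : ℝ) (ht : 0 < t),
        (‖distConv f Φ t ht x‖₊ : ℝ≥0∞)) ≤ _
    refine iSup_le fun Φ => iSup_le fun hΦm => iSup_le fun t => iSup_le fun ht => ?_
    obtain ⟨Ψ, s, hs, hmem, hKey⟩ := hkey R x z t ht Φ hΦm hR hznorm hx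
    -- vanishing of the difference near the support of f
    have hvanish : ∀ w : Euc n, ‖w‖ < 3 * R →
        (dilateShift Φ t ht x - K • dilateShift Ψ s hs z) w = 0 := by
      intro w hw
      rw [SchwartzMap.sub_apply, SchwartzMap.smul_apply, smul_eq_mul, ← hKey w hw, sub_self]
    have hDzero : f (dilateShift Φ t ht x - K • dilateShift Ψ s hs z) = 0 := by
      apply hsupp
      have hsubset : tsupport ⇑(dilateShift Φ t ht x - K • dilateShift Ψ s hs z) ⊆
          (Metric.ball (0 : Euc n) (3 * R))ᶜ := by
        apply closure_minimal _ (Metric.isOpen_ball.isClosed_compl)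
        intro w hw
        simp only [Set.mem_compl_iff, Metric.mem_ball, dist_zero_right, not_lt]
        by_contra hcon
        push_neg at hcon
        exact hw (hvanish w hcon)
      rw [Set.disjoint_left]
      intro w hw1 hw2
      have h1 : ‖w‖ ≤ R := by rwa [Metric.mem_closedBall, dist_zero_right] at hw2
      have h2 := hsubset hw1
      simp only [Set.mem_compl_iff, Metric.mem_ball, dist_zero_right, not_lt] at h2
      linarith
    have heq : distConv f Φ t ht x = K * distConv f Ψ s hs z := by
      have h1 := map_sub f (dilateShift Φ t ht x) (K • dilateShift Ψ s hs z)
      rw [hDzero] at h1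
      have h2 : f (K • dilateShift Ψ s hs z) = K * f (dilateShift Ψ s hs z) := by
        rw [_root_.map_smul, smul_eq_mul]
      rw [h2] at h1
      unfold distConv
      linarith [h1.symm]
    have hup : (‖distConv f Ψ s hs z‖₊ : ℝ≥0∞) ≤ grandMax N f z := by
      show _ ≤ ⨆ (Φ' : 𝓢(Euc n, ℝ)) (_ : Φ' ∈ schwartzSetN N) (t' : ℝ) (ht' : 0 < t'),
        (‖distConv f Φ' t' ht' z‖₊ : ℝ≥0∞)
      exact le_iSup_of_le Ψ (le_iSup_of_le hmem (le_iSup_of_le s (le_iSup_of_le hs le_rfl)))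
    calc (‖distConv f Φ t ht x‖₊ : ℝ≥0∞)
        = ENNReal.ofReal K * (‖distConv f Ψ s hs z‖₊ : ℝ≥0∞) := by
          rw [heq, nnnorm_mul, ENNReal.coe_mul, ← enorm_eq_nnnorm K, Real.enorm_eq_ofReal hK0.le]
      _ ≤ ENNReal.ofReal K * grandMax N f z := mul_le_mul_right hup _
  -- trivial case
  by_cases hG0 : grandMax N f x = 0
  · rw [hG0]; exact bot_le
  -- a finite element of the defining set of the Hardy norm
  have hHlt : sInf {l : ℝ≥0∞ | ∫⁻ x', (grandMax N f x' / l) ^ p x' ∂volume ≤ 1} < ∞ := hH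
  obtain ⟨l₀, hl₀mem, hl₀top⟩ := sInf_lt_iff.mp hHlt
  simp only [Set.mem_setOf_eq] at hl₀mem
  have hballpos : 0 < volume (Metric.closedBall (0 : Euc n) R) :=
    lt_of_lt_of_le (measure_ball_pos volume 0 hRpos)
      (measure_mono Metric.ball_subset_closedBall)
  -- the grand maximal function is finite at x
  have hGtop : grandMax N f x ≠ ∞ := by
    intro hGinf
    have hall : ∀ z ∈ Metric.closedBall (0 : Euc n) R, grandMax N f z = ∞ := by
      intro z hzb
      have h1 := hA z hzb
      rw [hGinf, top_le_iff] at h1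
      rcases ENNReal.mul_eq_top.mp h1 with ⟨-, h⟩ | ⟨h, -⟩
      · exact h
      · exact absurd h hKnetop
    have hinfint : ∀ᵐ x' ∂(volume.restrict (Metric.closedBall (0 : Euc n) R)),
        (grandMax N f x' / l₀) ^ p x' = ∞ := by
      filter_upwards [ae_restrict_of_ae hpm, ae_restrict_mem measurableSet_closedBall]
        with x' h1 h2
      rw [hall x' h2, ENNReal.top_div_of_lt_top hl₀top,
        ENNReal.top_rpow_of_pos (by linarith)]
    have hcontra : (∞ : ℝ≥0∞) ≤ ∫⁻ x', (grandMax N f x' / l₀) ^ p x' ∂volume := by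
      calc (∞ : ℝ≥0∞) = ∞ * volume (Metric.closedBall (0 : Euc n) R) := by
            rw [ENNReal.top_mul hballpos.ne']
        _ = ∫⁻ _ in Metric.closedBall (0 : Euc n) R, (∞ : ℝ≥0∞) ∂volume :=
            (setLIntegral_const _ _).symm
        _ = ∫⁻ x' in Metric.closedBall (0 : Euc n) R,
              (grandMax N f x' / l₀) ^ p x' ∂volume :=
            (lintegral_congr_ae hinfint).symm
        _ ≤ _ := setLIntegral_le_lintegral _ _
    have := le_trans hcontra hl₀mem
    exact absurd this (by simp)
  -- the constant c
  set c : ℝ≥0∞ := (ENNReal.ofReal K)⁻¹ * grandMax N f x with hcdef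
  have hc0 : c ≠ 0 := by
    apply mul_ne_zero _ hG0
    simp [hKnetop]
  have hctop : c ≠ ∞ := ENNReal.mul_ne_top (by simp [hKne0]) hGtop
  have hpt : ∀ x', c * ballInd 0 R x' ≤ grandMax N f x' := by
    intro x'
    by_cases hx' : x' ∈ Metric.closedBall (0 : Euc n) R
    · have hind : ballInd (0 : Euc n) R x' = 1 := by
        rw [ballInd, Set.indicator_of_mem hx']; rfl
      rw [hind, mul_one, hcdef]
      calc (ENNReal.ofReal K)⁻¹ * grandMax N f x
          ≤ (ENNReal.ofReal K)⁻¹ * (ENNReal.ofReal K * grandMax N f x') :=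
            mul_le_mul_right (hA x' hx') _
        _ = grandMax N f x' := by
            rw [← mul_assoc, ENNReal.inv_mul_cancel hKne0 hKnetop, one_mul]
    · have hind : ballInd (0 : Euc n) R x' = 0 := by
        rw [ballInd, Set.indicator_of_notMem hx']
      rw [hind, mul_zero]
      exact bot_le
  have hle1 : c * ballNorm p 0 R ≤ hardyNorm p N f := by
    calc c * ballNorm p 0 R
        ≤ luxNorm p (fun x' => c * ballInd 0 R x') := luxNorm_const_mul_le hc0 hctop _
      _ ≤ luxNorm p (grandMax N f) := luxNorm_mono hp_nonneg hpt
      _ = hardyNorm p N f := rfl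
  have hB0 : ballNorm p 0 R ≠ 0 := ballNorm_ne_zero hm0 hpm hRpos
  have hBtop : ballNorm p 0 R ≠ ∞ := ballNorm_ne_top hm0 hpm hRpos
  have hcle : c ≤ hardyNorm p N f * (ballNorm p 0 R)⁻¹ := by
    rw [← div_eq_mul_inv]
    exact (ENNReal.le_div_iff_mul_le (Or.inl hB0) (Or.inl hBtop)).2 hle1
  calc grandMax N f x = ENNReal.ofReal K * c := by
        rw [hcdef, ← mul_assoc, ENNReal.mul_inv_cancel hKne0 hKnetop, one_mul]
    _ ≤ ENNReal.ofReal K * (hardyNorm p N f * (ballNorm p 0 R)⁻¹) := mul_le_mul_right hcle _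
    _ = ENNReal.ofReal K * hardyNorm p N f * (ballNorm p 0 R)⁻¹ := by rw [mul_assoc]

end VarHardy
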